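/- Let {a_t}_{t=0}^∞ and {b_t}_{t=0}^∞ be two sequences of non-negative real numbers. Assume that the series ∑_{t=0}^∞ a_t b_t converges, that the series ∑_{t=0}^∞ a_t diverges, and that there exists a constant L ≥ 0 such that |b_{t+1} − b_t| ≤ L·a_t for all t ≥ 0. Then lim_{t→∞} b_t = 0. -/

import Mathlib

open Filter

/-- If `a`, `b` are sequences of non-negative reals, `∑ aₜbₜ` converges,
`∑ aₜ` diverges (partial sums tend to infinity), and `|b_{t+1} - bₜ| ≤ L·aₜ`
for some `L ≥ 0`, then `bₜ → 0`. -/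
theorem stmt_0 (a b : ℕ → ℝ) (ha : ∀ t, 0 ≤ a t) (hb : ∀ t, 0 ≤ b t)
    (hconv : Summable (fun t => a t * b t))
    (hdiv : Tendsto (fun T => ∑ t ∈ Finset.range T, a t) atTop atTop)
    (L : ℝ) (hL : 0 ≤ L) (hLa : ∀ t, |b (t + 1) - b t| ≤ L * a t) :
    Tendsto b atTop (nhds 0) := by
  have hab : ∀ t, 0 ≤ a t * b t := fun t => mul_nonneg (ha t) (hb t)
  rw [Metric.tendsto_atTop]
  intro ε hε
  set L₁ : ℝ := L + 1 with hL₁def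
  have hL₁ : 0 < L₁ := by positivity
  set δ : ℝ := ε ^ 2 / (8 * L₁) with hδdef
  have hδ : 0 < δ := by positivity
  -- tail sums are small
  obtain ⟨s, hs⟩ := summable_iff_vanishing.mp hconv (Metric.ball 0 δ)
    (Metric.ball_mem_nhds 0 hδ)
  set N : ℕ := s.sup id + 1 with hNdef
  have hvan : ∀ n m : ℕ, N ≤ n → (∑ t ∈ Finset.Ico n m, a t * b t) < δ := by
    intro n m hn
    have hdisj : Disjoint (Finset.Ico n m) s := by
      rw [Finset.disjoint_left]
      intro x hx hxs
      have h1 : x ≤ s.sup id := Finset.le_sup (f := id) hxs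
      have h2 : n ≤ x := (Finset.mem_Ico.mp hx).1
      omega
    have := hs _ hdisj
    rw [Metric.mem_ball, dist_zero_right] at this
    exact lt_of_le_of_lt (le_abs_self _) this
  -- b drops below ε/2 infinitely often
  have hbelow : ∀ k : ℕ, ∃ m, k ≤ m ∧ b m < ε / 2 := by
    intro k
    by_contra h
    push_neg at h
    set C : ℝ := ∑' t, a t * b t with hCdef
    obtain ⟨T, hTk, hT⟩ : ∃ T, k ≤ T ∧
        (∑ t ∈ Finset.range k, a t) + (2 / ε) * C + 1 ≤ ∑ t ∈ Finset.range T, a t := by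
      have := (eventually_ge_atTop k).and
        (hdiv.eventually_ge_atTop ((∑ t ∈ Finset.range k, a t) + (2 / ε) * C + 1))
      obtain ⟨T, h1, h2⟩ := this.exists
      exact ⟨T, h1, h2⟩
    have hsum1 : (ε / 2) * ∑ t ∈ Finset.Ico k T, a t ≤ ∑ t ∈ Finset.Ico k T, a t * b t := by
      rw [Finset.mul_sum]
      refine Finset.sum_le_sum fun t ht => ?_
      have hbt := h t (Finset.mem_Ico.mp ht).1
      nlinarith [ha t, hb t]
    have hsum2 : ∑ t ∈ Finset.Ico k T, a t * b t ≤ C := by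
      calc ∑ t ∈ Finset.Ico k T, a t * b t
          ≤ ∑ t ∈ Finset.range T, a t * b t := by
            apply Finset.sum_le_sum_of_subset_of_nonneg
            · intro x hx
              exact Finset.mem_range.mpr (Finset.mem_Ico.mp hx).2
            · intro t _ _; exact hab t
        _ ≤ C := Summable.sum_le_tsum _ (fun t _ => hab t) hconv
    have hIco : ∑ t ∈ Finset.Ico k T, a t
        = (∑ t ∈ Finset.range T, a t) - ∑ t ∈ Finset.range k, a t := by
      rw [Finset.sum_Ico_eq_sub _ hTk]
    have hC0 : 0 ≤ C := tsum_nonneg hab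
    rw [hIco] at hsum1
    have h3 : (2 / ε) * C + 1 ≤ (∑ t ∈ Finset.range T, a t) - ∑ t ∈ Finset.range k, a t := by
      linarith
    have h4 : ε / 2 * ((2 / ε) * C + 1) ≤ C :=
      le_trans (mul_le_mul_of_nonneg_left h3 (by positivity)) (hsum1.trans hsum2)
    have h5 : ε / 2 * ((2 / ε) * C + 1) = C + ε / 2 := by
      field_simp
    linarith
  -- main argument
  obtain ⟨M, hMN, hMb⟩ := hbelow N
  refine ⟨M, fun n hn => ?_⟩
  rw [Real.dist_eq, sub_zero, abs_of_nonneg (hb n)]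
  by_contra hcon
  push_neg at hcon
  -- b n ≥ ε, n ≥ M ≥ N
  have hP : ∃ m, n < m ∧ b m < ε / 2 := by
    obtain ⟨m, hm1, hm2⟩ := hbelow (n + 1)
    exact ⟨m, by omega, hm2⟩
  classical
  set m := Nat.find hP with hmdef
  have hnm : n < m := (Nat.find_spec hP).1
  have hbm : b m < ε / 2 := (Nat.find_spec hP).2
  have hmid : ∀ t, n ≤ t → t < m → ε / 2 ≤ b t := by
    intro t hnt htm
    rcases eq_or_lt_of_le hnt with rfl | hlt
    · linarith
    · have := Nat.find_min hP htm
      push_neg at this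
      exact this hlt
  -- telescoping bound
  have htel : b n - b m ≤ ∑ t ∈ Finset.Ico n m, |b (t + 1) - b t| := by
    have : b m - b n = ∑ t ∈ Finset.Ico n m, (b (t + 1) - b t) := by
      rw [Finset.sum_Ico_eq_sub _ hnm.le]
      rw [Finset.sum_range_sub (fun i => b i), Finset.sum_range_sub (fun i => b i)]
      ring
    have h2 : -∑ t ∈ Finset.Ico n m, |b (t + 1) - b t|
        ≤ ∑ t ∈ Finset.Ico n m, (b (t + 1) - b t) := by
      rw [← Finset.sum_neg_distrib]
      exact Finset.sum_le_sum fun t _ => neg_abs_le _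
    linarith
  have hstep : ∑ t ∈ Finset.Ico n m, |b (t + 1) - b t|
      ≤ (2 * L₁ / ε) * ∑ t ∈ Finset.Ico n m, a t * b t := by
    rw [Finset.mul_sum]
    refine Finset.sum_le_sum fun t ht => ?_
    obtain ⟨h1, h2⟩ := Finset.mem_Ico.mp ht
    have hbt := hmid t h1 h2
    have := hLa t
    have haL : L * a t ≤ L₁ * a t := by nlinarith [ha t]
    have : |b (t + 1) - b t| ≤ L₁ * a t := this.trans haL
    calc |b (t + 1) - b t| ≤ L₁ * a t := this
      _ ≤ (2 * L₁ / ε) * (a t * b t) := by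
          rw [div_mul_eq_mul_div, le_div_iff₀ hε]
          have hkey := mul_le_mul_of_nonneg_left hbt (mul_nonneg hL₁.le (ha t))
          nlinarith [hkey]
  have hsmall : ∑ t ∈ Finset.Ico n m, a t * b t < δ := hvan n m (by omega)
  have hpos : (0:ℝ) ≤ 2 * L₁ / ε := by positivity
  have : b n - b m < (2 * L₁ / ε) * δ := by
    calc b n - b m ≤ (2 * L₁ / ε) * ∑ t ∈ Finset.Ico n m, a t * b t := htel.trans hstep
      _ < (2 * L₁ / ε) * δ := by
          apply mul_lt_mul_of_pos_left hsmall (by positivity)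
  have hδval : (2 * L₁ / ε) * δ = ε / 4 := by
    rw [hδdef]; field_simp; ring
  rw [hδval] at this
  linarith
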